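/- Let G be a group acting on a set M and let H be a finite subgroup of G which is the unique maximal stationary subgroup of the action up to conjugation. Then the induced action of N(H)/H on M^H is free: if n ∈ N(H) and x ∈ M^H satisfy n • x = x, then n ∈ H. -/

import Mathlib

/-- The fixed-point set `M^K` of a subgroup `K` acting on `M`. -/
def fixedPts {G : Type*} [Group G] (M : Type*) [MulAction G M] (K : Subgroup G) : Set M :=
  {x : M | ∀ k ∈ K, k • x = x}

/-- The conjugate subgroup `gHg⁻¹`. -/
def conjSubgroup {G : Type*} [Group G] (g : G) (H : Subgroup G) : Subgroup G :=
  Subgroup.map (MulAut.conj g).toMonoidHom H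

/-- `H` is the unique, up to conjugation, maximal stationary subgroup of the action of `G`
on `M`: `H` is finite and every subgroup with nonempty fixed-point set is contained in
some conjugate of `H`. -/
def UniqueMaxStationary {G : Type*} [Group G] (M : Type*) [MulAction G M]
    (H : Subgroup G) : Prop :=
  Finite H ∧ ∀ K : Subgroup G, (fixedPts M K).Nonempty → ∃ l : G, K ≤ conjSubgroup l H

/-- If `H` is the unique maximal stationary subgroup up to conjugation, then the induced
action of `N(H)/H` on `M^H` is free: if `n ∈ N(H)` fixes some `x ∈ M^H`, then `n ∈ H`. -/
theorem quotient_action_free_on_fixedPts {G M : Type*} [Group G] [MulAction G M]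
    (H : Subgroup G) (hH : UniqueMaxStationary M H) :
    ∀ n ∈ Subgroup.normalizer (H : Set G), ∀ x ∈ fixedPts M H, n • x = x → n ∈ H := by
  obtain ⟨hfin, hmax⟩ := hH
  intro n hn x hx hnx
  set K : Subgroup G := H ⊔ Subgroup.zpowers n with hK
  have hKle : K ≤ MulAction.stabilizer G x := by
    apply sup_le
    · intro h hh
      exact hx h hh
    · rw [Subgroup.zpowers_le]
      exact hnx
  have hxK : x ∈ fixedPts M K := fun k hk => hKle hk
  obtain ⟨l, hl⟩ := hmax K ⟨x, hxK⟩
  have hHle : H ≤ conjSubgroup l H := le_trans le_sup_left hl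
  have hinj : Function.Injective (MulAut.conj l).toMonoidHom :=
    (MulAut.conj l).injective
  have hcard : Nat.card (conjSubgroup l H) = Nat.card H :=
    (Nat.card_congr (Subgroup.equivMapOfInjective H _ hinj).toEquiv).symm
  have hfin' : Finite (conjSubgroup l H) := by
    unfold conjSubgroup
    exact Set.Finite.to_subtype (Set.Finite.image _ (Set.toFinite _))
  have heq : H = conjSubgroup l H :=
    Subgroup.eq_of_le_of_card_ge hHle (ge_of_eq hcard.symm)
  have : n ∈ K := Subgroup.mem_sup_right (Subgroup.mem_zpowers n)
  rw [heq]
  exact hl this
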